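/- Let $M$ be a $d$-by-$m$ matrix of rank $d$ over a field $k$ of characteristic zero with no zero columns, and let $g = \sum_{j=1}^m c_j x_j \in A_1(M)$ be a linear form with $c_j \neq 0$ for all $j$. Then for each $0 \leq j \leq m/2$, multiplication by $g^{m-2j}$ gives an injective $k$-linear map from $A_j(M)$ to $A_{m-j}(M)$. -/
import Mathlib


open MvPolynomial

noncomputable section

/-- The ideal generated by the squares of the variables. -/
def sqIdeal (k : Type*) [Field k] (m : ℕ) : Ideal (MvPolynomial (Fin m) k) :=
  Ideal.span (Set.range fun i => (X i : MvPolynomial (Fin m) k) ^ 2)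

/-- `B = k[x_1,...,x_m]/(x_1^2,...,x_m^2)`. -/
abbrev Bq (k : Type*) [Field k] (m : ℕ) := MvPolynomial (Fin m) k ⧸ sqIdeal k m

/-- Quotient map onto `B`. -/
def bmk (k : Type*) [Field k] (m : ℕ) : MvPolynomial (Fin m) k →ₐ[k] Bq k m :=
  Ideal.Quotient.mkₐ k (sqIdeal k m)

/-- The degree-`j` graded piece of `B`, spanned by images of squarefree monomials of degree `j`. -/
def Bgrade (k : Type*) [Field k] (m j : ℕ) : Submodule k (Bq k m) :=
  Submodule.span k { b | ∃ s : Finset (Fin m), s.card = j ∧ b = bmk k m (∏ i ∈ s, X i) }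

/-- The linear form in `B` with coefficient vector `c`. -/
def lform {k : Type*} [Field k] {m : ℕ} (c : Fin m → k) : Bq k m :=
  bmk k m (∑ j, C (c j) * X j)

/-- `A(M)`: the subalgebra of `B` generated by the rows of `M`, viewed as linear forms. -/
def Asub (k : Type*) [Field k] {ι : Type*} [Fintype ι] {m : ℕ} (M : Matrix ι (Fin m) k) :
    Subalgebra k (Bq k m) :=
  Algebra.adjoin k (Set.range fun i => lform (M i))

/-- The degree-`j` graded piece `A_j(M)` of `A(M)`. -/
def Aj (k : Type*) [Field k] {ι : Type*} [Fintype ι] {m : ℕ} (M : Matrix ι (Fin m) k)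
    (j : ℕ) : Submodule k (Bq k m) :=
  (Subalgebra.toSubmodule (Asub k M)) ⊓ Bgrade k m j

noncomputable section

variable {k : Type*} [Field k] {m : ℕ}

abbrev Wm (k : Type*) [Field k] (m : ℕ) := Finset (Fin m) → k

/-- Up operator. -/
def Uop (c : Fin m → k) : Wm k m →ₗ[k] Wm k m :=
  LinearMap.pi fun T => ∑ i ∈ T, c i • LinearMap.proj (T.erase i)

/-- Down operator. -/
def Dop (c : Fin m → k) : Wm k m →ₗ[k] Wm k m :=
  LinearMap.pi fun T => ∑ i ∈ Tᶜ, (c i)⁻¹ • LinearMap.proj (insert i T)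

lemma Uop_apply (c : Fin m → k) (w : Wm k m) (T : Finset (Fin m)) :
    Uop c w T = ∑ i ∈ T, c i * w (T.erase i) := by
  simp [Uop, LinearMap.pi_apply, LinearMap.sum_apply]

lemma Dop_apply (c : Fin m → k) (w : Wm k m) (T : Finset (Fin m)) :
    Dop c w T = ∑ i ∈ Tᶜ, (c i)⁻¹ * w (insert i T) := by
  simp [Dop, LinearMap.pi_apply, LinearMap.sum_apply]

/-- degree predicate -/
def Hdeg (m : ℕ) (j : ℕ) (w : Wm k m) : Prop := ∀ T, w T ≠ 0 → T.card = j

lemma Hdeg_U {c : Fin m → k} {j : ℕ} {w : Wm k m} (h : Hdeg m j w) :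
    Hdeg m (j + 1) (Uop c w) := by
  intro T hT
  rw [Uop_apply] at hT
  obtain ⟨i, hi, hne⟩ := Finset.exists_ne_zero_of_sum_ne_zero hT
  have := h _ (right_ne_zero_of_mul hne)
  rw [Finset.card_erase_of_mem hi] at this
  have : 1 ≤ T.card := Finset.card_pos.mpr ⟨i, hi⟩
  omega

lemma Hdeg_D {c : Fin m → k} {j : ℕ} {w : Wm k m} (h : Hdeg m (j+1) w) :
    Hdeg m j (Dop c w) := by
  intro T hT
  rw [Dop_apply] at hT
  obtain ⟨i, hi, hne⟩ := Finset.exists_ne_zero_of_sum_ne_zero hT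
  have := h _ (right_ne_zero_of_mul hne)
  rw [Finset.card_insert_of_notMem (Finset.mem_compl.mp hi)] at this
  omega

lemma Dop_zero_of_Hdeg0 {c : Fin m → k} {w : Wm k m} (h : Hdeg m 0 w) :
    Dop c w = 0 := by
  funext T
  rw [Dop_apply]
  refine Finset.sum_eq_zero fun i hi => ?_
  have : w (insert i T) = 0 := by
    by_contra hne
    have := h _ hne
    simp [Finset.card_insert_of_notMem (by simpa using hi)] at this
  simp [this]

/-- pointwise commutator -/
lemma comm_pointwise (c : Fin m → k) (hc : ∀ i, c i ≠ 0) (w : Wm k m) (T : Finset (Fin m)) :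
    Dop c (Uop c w) T - Uop c (Dop c w) T = ((m : k) - 2 * T.card) * w T := by
  have hTm : T.card ≤ m := by simpa using T.card_le_univ
  rw [Dop_apply, Uop_apply]
  have h1 : ∀ i ∈ Tᶜ, (c i)⁻¹ * Uop c w (insert i T)
      = w T + ∑ l ∈ T, (c i)⁻¹ * c l * w (insert i (T.erase l)) := by
    intro i hi
    have hiT : i ∉ T := by simpa using hi
    rw [Uop_apply, Finset.sum_insert hiT, Finset.erase_insert hiT, mul_add, Finset.mul_sum,
      ← mul_assoc, inv_mul_cancel₀ (hc i), one_mul]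
    congr 1
    refine Finset.sum_congr rfl fun l hl => ?_
    rw [← mul_assoc, Finset.erase_insert_of_ne]
    exact fun h => hiT (h ▸ hl)
  have h2 : ∀ l ∈ T, c l * Dop c w (T.erase l)
      = w T + ∑ i ∈ Tᶜ, c l * (c i)⁻¹ * w (insert i (T.erase l)) := by
    intro l hl
    rw [Dop_apply, Finset.compl_erase, Finset.sum_insert (by simpa using hl),
      Finset.insert_erase hl, mul_add, ← mul_assoc, mul_inv_cancel₀ (hc l), one_mul, Finset.mul_sum]
    congr 1
    exact Finset.sum_congr rfl fun i hi => by ring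
  rw [Finset.sum_congr rfl h1, Finset.sum_congr rfl h2, Finset.sum_add_distrib,
    Finset.sum_add_distrib, Finset.sum_const, Finset.sum_const, Finset.card_compl]
  rw [Finset.sum_comm (s := Tᶜ)]
  have : ∀ l ∈ T, ∀ i ∈ Tᶜ, (c i)⁻¹ * c l * w (insert i (T.erase l))
      = c l * (c i)⁻¹ * w (insert i (T.erase l)) := fun l _ i _ => by ring
  rw [Finset.sum_congr rfl fun l hl => Finset.sum_congr rfl (this l hl)]
  simp only [Fintype.card_fin, nsmul_eq_mul]
  push_cast [Nat.cast_sub hTm]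
  ring


lemma pow_shift {M : Type*} [AddCommMonoid M] {R : Type*} [Semiring R] [Module R M]
    (f : M →ₗ[R] M) (n : ℕ) (x : M) : (f ^ (n+1)) x = (f ^ n) (f x) := by
  rw [pow_succ]; rfl

lemma comm_deg (c : Fin m → k) (hc : ∀ i, c i ≠ 0) {j : ℕ} {w : Wm k m} (h : Hdeg m j w) :
    Dop c (Uop c w) = Uop c (Dop c w) + ((m : k) - 2 * j) • w := by
  funext T
  have := comm_pointwise c hc w T
  by_cases hw : w T = 0
  · simp only [Pi.add_apply, Pi.smul_apply, hw, smul_zero, add_zero]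
    rw [hw, mul_zero] at this
    linear_combination this
  · have hcard := h T hw
    simp only [Pi.add_apply, Pi.smul_apply, smul_eq_mul, ← hcard]
    linear_combination this

lemma lemmaK (c : Fin m → k) (hc : ∀ i, c i ≠ 0) :
    ∀ (r j : ℕ) (w : Wm k m), Hdeg m j w →
      Dop c ((Uop c ^ (r+1)) w) = (Uop c ^ (r+1)) (Dop c w)
        + ((r+1 : k) * ((m : k) - 2 * j - r)) • ((Uop c ^ r) w) := by
  intro r
  induction r with
  | zero =>
    intro j w h
    simpa [pow_one] using comm_deg c hc h
  | succ r IH =>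
    intro j w h
    have hUw : Hdeg m (j+1) (Uop c w) := Hdeg_U h
    rw [pow_shift (Uop c) (r+1) w, IH (j+1) (Uop c w) hUw, comm_deg c hc h]
    have e1 : (Uop c ^ (r+1)) (Uop c (Dop c w) + ((m : k) - 2 * j) • w)
        = (Uop c ^ (r+2)) (Dop c w) + ((m : k) - 2 * j) • (Uop c ^ (r+1)) w := by
      rw [map_add, map_smul, ← pow_shift (Uop c) (r+1) (Dop c w)]
    rw [e1]
    have e2 : (Uop c ^ r) (Uop c w) = (Uop c ^ (r+1)) w := (pow_shift (Uop c) r w).symm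
    rw [e2, add_assoc, ← add_smul]
    congr 2
    push_cast
    ring

lemma pow_shift' {M : Type*} [AddCommMonoid M] {R : Type*} [Semiring R] [Module R M]
    (f : M →ₗ[R] M) (n : ℕ) (x : M) : (f ^ (n+1)) x = f ((f ^ n) x) := by
  rw [pow_succ']; rfl

lemma descent_zero (c : Fin m → k) (hc : ∀ i, c i ≠ 0) [CharZero k] {j : ℕ} (h2j : 2*j ≤ m)
    {w : Wm k m} (hdeg : Hdeg m j w) (hD : Dop c w = 0)
    (hU : (Uop c ^ (m - 2*j)) w = 0) : w = 0 := by
  suffices H : ∀ t, t ≤ m - 2*j → (Uop c ^ (m - 2*j - t)) w = 0 by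
    have := H (m - 2*j) le_rfl
    simpa using this
  intro t
  induction t with
  | zero => intro _; simpa using hU
  | succ t IHt =>
    intro ht
    have h1 := IHt (by omega)
    have hidx : (m - 2*j) - (t+1) + 1 = (m - 2*j) - t := by omega
    have hK := lemmaK c hc ((m - 2*j) - (t+1)) j w hdeg
    rw [hidx, h1, hD, map_zero, map_zero, zero_add] at hK
    have hco : ((((m - 2*j) - (t+1) : ℕ) : k) + 1) * ((m : k) - 2 * j - (((m - 2*j) - (t+1) : ℕ))) ≠ 0 := by
      have hm : m = 2*j + ((m - 2*j) - (t+1)) + (t+1) := by omega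
      have e1 : ((((m - 2*j) - (t+1) : ℕ) : k) + 1) = ((((m - 2*j) - (t+1)) + 1 : ℕ) : k) := by
        push_cast; ring
      have e2 : ((m : k) - 2 * j - (((m - 2*j) - (t+1) : ℕ))) = ((t+1 : ℕ) : k) := by
        nth_rewrite 1 [hm]
        push_cast; ring
      rw [e1, e2]
      exact mul_ne_zero (Nat.cast_ne_zero.mpr (by omega)) (Nat.cast_ne_zero.mpr (by omega))
    rcases smul_eq_zero.mp hK.symm with h | h
    · exact absurd h hco
    · exact h

theorem Upow_inj (c : Fin m → k) (hc : ∀ i, c i ≠ 0) [CharZero k] :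
    ∀ (j : ℕ), 2 * j ≤ m → ∀ w : Wm k m, Hdeg m j w →
      (Uop c ^ (m - 2*j)) w = 0 → w = 0 := by
  intro j
  induction j with
  | zero =>
    intro h2j w hw hU
    exact descent_zero c hc h2j hw (Dop_zero_of_Hdeg0 hw) hU
  | succ j IH =>
    intro h2j w hw hU
    have hU1 : (Uop c ^ (m - 2*(j+1) + 1)) w = 0 := by
      rw [pow_shift', hU, map_zero]
    have hK := lemmaK c hc (m - 2*(j+1)) (j+1) w hw
    rw [hU1, hU, smul_zero, add_zero] at hK
    rw [show (Dop c) (0 : Wm k m) = 0 from map_zero _] at hK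
    have hDdeg : Hdeg m j (Dop c w) := Hdeg_D hw
    have hDU : (Uop c ^ (m - 2*j)) (Dop c w) = 0 := by
      have hidx : m - 2*j = (m - 2*(j+1) + 1) + 1 := by omega
      rw [hidx, pow_shift', ← hK]
      exact map_zero _
    have hD : Dop c w = 0 := IH (by omega) _ hDdeg hDU
    exact descent_zero c hc h2j hw hD hU

-- ===== transfer layer =====
open MvPolynomial

variable (k : Type*) [Field k] (m : ℕ)

def indic (S : Finset (Fin m)) : Fin m →₀ ℕ := ∑ i ∈ S, Finsupp.single i 1

lemma indic_apply (S : Finset (Fin m)) (i : Fin m) :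
    indic m S i = if i ∈ S then 1 else 0 := by
  classical
  rw [indic, Finset.sum_apply']
  simp [Finsupp.single_apply]

lemma indic_inj {S T : Finset (Fin m)} (h : indic m S = indic m T) : S = T := by
  ext i
  have := DFunLike.congr_fun h i
  rw [indic_apply, indic_apply] at this
  by_cases hS : i ∈ S <;> by_cases hT : i ∈ T <;> simp_all

lemma sf_eq_monomial (S : Finset (Fin m)) :
    (∏ i ∈ S, X i : MvPolynomial (Fin m) k) = monomial (indic m S) 1 := by
  classical
  induction S using Finset.induction with
  | empty => simp [indic]
  | @insert i S hi ih =>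
    rw [Finset.prod_insert hi, ih, show (X i : MvPolynomial (Fin m) k)
      = monomial (Finsupp.single i 1) 1 from rfl, monomial_mul, one_mul, indic, indic,
      Finset.sum_insert hi]

lemma coeff_indic_sf (S T : Finset (Fin m)) :
    coeff (indic m T) (∏ i ∈ S, X i : MvPolynomial (Fin m) k)
      = if S = T then 1 else 0 := by
  rw [sf_eq_monomial, coeff_monomial]
  by_cases h : S = T
  · simp [h]
  · rw [if_neg h, if_neg fun he => h (indic_inj m he)]

lemma squarefree_eq_indic (β : Fin m →₀ ℕ) (hβ : ∀ i, β i ≤ 1) :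
    β = indic m β.support := by
  ext i
  rw [indic_apply]
  by_cases h : i ∈ β.support
  · rw [if_pos h]
    have h1 := Finsupp.mem_support_iff.mp h
    have h2 := hβ i
    omega
  · rw [if_neg h]
    exact Finsupp.notMem_support_iff.mp h

lemma coeff_indic_of_mem_sqIdeal {p : MvPolynomial (Fin m) k} (hp : p ∈ sqIdeal k m) :
    ∀ S : Finset (Fin m), coeff (indic m S) p = 0 := by
  refine Submodule.span_induction ?_ ?_ ?_ ?_ hp
  · rintro x ⟨i, rfl⟩ S
    simp only
    rw [X_pow_eq_monomial, coeff_monomial, if_neg]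
    intro he
    have := DFunLike.congr_fun he i
    rw [indic_apply] at this
    simp only [Finsupp.single_eq_same] at this
    split_ifs at this <;> omega
  · intro S; simp
  · intro x y _ _ hx hy S
    rw [coeff_add, hx, hy, add_zero]
  · intro a x _ hx S
    rw [smul_eq_mul, coeff_mul]
    refine Finset.sum_eq_zero fun q hq => ?_
    have hsum : q.1 + q.2 = indic m S := Finset.HasAntidiagonal.mem_antidiagonal.mp hq
    have hle : ∀ i, q.2 i ≤ 1 := by
      intro i
      have : q.1 i + q.2 i = indic m S i := by
        rw [← hsum]; rfl
      rw [indic_apply] at this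
      split_ifs at this <;> omega
    rw [squarefree_eq_indic m q.2 hle, hx, mul_zero]

lemma bmk_eq_zero_iff (p : MvPolynomial (Fin m) k) :
    bmk k m p = 0 ↔ p ∈ sqIdeal k m := by
  rw [bmk, Ideal.Quotient.mkₐ_eq_mk, Ideal.Quotient.eq_zero_iff_mem]

/-- the comparison map from the function model to `Bq`. -/
def Psi : Wm k m →ₗ[k] Bq k m :=
  ∑ T : Finset (Fin m), (LinearMap.proj T).smulRight (bmk k m (∏ i ∈ T, X i))

lemma Psi_apply (w : Wm k m) :
    Psi k m w = ∑ T : Finset (Fin m), w T • bmk k m (∏ i ∈ T, X i) := by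
  simp [Psi, LinearMap.sum_apply]

lemma Psi_single (S : Finset (Fin m)) (t : k) :
    Psi k m (Pi.single S t) = t • bmk k m (∏ i ∈ S, X i) := by
  rw [Psi_apply]
  rw [Finset.sum_eq_single S (fun T _ hT => by rw [Pi.single_eq_of_ne hT, zero_smul])
    (fun h => absurd (Finset.mem_univ S) h)]
  rw [Pi.single_eq_same]

lemma Psi_injective : ∀ w : Wm k m, Psi k m w = 0 → w = 0 := by
  intro w hw
  have h1 : Psi k m w = bmk k m (∑ T : Finset (Fin m), w T • ∏ i ∈ T, X i) := by
    rw [Psi_apply, map_sum]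
    exact Finset.sum_congr rfl fun T _ => by rw [map_smul]
  rw [h1, bmk_eq_zero_iff] at hw
  have h2 := coeff_indic_of_mem_sqIdeal k m hw
  funext S
  have h3 := h2 S
  rw [coeff_sum] at h3
  have h4 : ∀ T ∈ Finset.univ, coeff (indic m S) (w T • ∏ i ∈ T, X i)
      = if T = S then w T else 0 := by
    intro T _
    rw [coeff_smul, coeff_indic_sf, smul_eq_mul]
    by_cases h : T = S <;> simp [h]
  rw [Finset.sum_congr rfl h4, Finset.sum_ite_eq' Finset.univ S (fun T => w T),
    if_pos (Finset.mem_univ S)] at h3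
  exact h3

def Wdeg (j : ℕ) : Submodule k (Wm k m) where
  carrier := {w | Hdeg m j w}
  add_mem' := by
    intro a b ha hb T hT
    by_cases h1 : a T = 0
    · exact hb T (by simpa [Pi.add_apply, h1] using hT)
    · exact ha T h1
  zero_mem' := fun T hT => absurd rfl hT
  smul_mem' := by
    intro r w hw T hT
    exact hw T fun h => hT (by simp [Pi.smul_apply, h])

lemma mem_Wdeg {j : ℕ} {w : Wm k m} : w ∈ Wdeg k m j ↔ Hdeg m j w := Iff.rfl

lemma span_single_eq_Wdeg (j : ℕ) :
    Submodule.span k {w : Wm k m | ∃ S : Finset (Fin m), S.card = j ∧ w = Pi.single S 1}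
      = Wdeg k m j := by
  apply le_antisymm
  · rw [Submodule.span_le]
    rintro w ⟨S, hS, rfl⟩ T hT
    by_cases h : T = S
    · rw [h]; exact hS
    · exact absurd (Pi.single_eq_of_ne h 1) hT
  · intro w hw
    rw [← Finset.univ_sum_single w]
    refine Submodule.sum_mem _ fun T _ => ?_
    by_cases h : w T = 0
    · rw [h]
      simp only [Pi.single_zero]
      exact Submodule.zero_mem _
    · have : Pi.single T (w T) = w T • (Pi.single T 1 : Wm k m) := by
        funext T'
        by_cases h' : T' = T
        · subst h'; simp
        · simp [Pi.single_eq_of_ne h']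
      rw [this]
      exact Submodule.smul_mem _ _ (Submodule.subset_span ⟨T, hw T h, rfl⟩)

lemma Bgrade_eq (j : ℕ) : Bgrade k m j = Submodule.map (Psi k m) (Wdeg k m j) := by
  rw [← span_single_eq_Wdeg, Submodule.map_span, Bgrade]
  congr 1
  ext b
  constructor
  · rintro ⟨S, hS, rfl⟩
    exact ⟨Pi.single S 1, ⟨S, hS, rfl⟩, by rw [Psi_single, one_smul]⟩
  · rintro ⟨w, ⟨S, hS, rfl⟩, rfl⟩
    exact ⟨S, hS, by rw [Psi_single, one_smul]⟩

variable (c : Fin m → k)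

lemma single_eq_smul (T : Finset (Fin m)) (t : k) :
    (Pi.single T t : Wm k m) = t • (Pi.single T 1 : Wm k m) := by
  funext T'
  by_cases h' : T' = T
  · subst h'; simp
  · simp [Pi.single_eq_of_ne h']

lemma U_single (S : Finset (Fin m)) :
    Uop c (Pi.single S (1:k)) = ∑ i ∈ Sᶜ, c i • (Pi.single (insert i S) (1:k) : Wm k m) := by
  classical
  funext T
  rw [Uop_apply]
  have L : ∀ i ∈ T, c i * ((Pi.single S (1:k) : Wm k m) (T.erase i))
      = if i ∈ T ∧ i ∉ S ∧ T = insert i S then c i else 0 := by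
    intro i hi
    rw [Pi.single_apply]
    by_cases h : T.erase i = S
    · rw [if_pos h, if_pos]
      · ring
      · refine ⟨hi, ?_, ?_⟩
        · rw [← h]; exact Finset.notMem_erase i T
        · rw [← h, Finset.insert_erase hi]
    · rw [if_neg h, if_neg, mul_zero]
      rintro ⟨h1, h2, rfl⟩
      exact h (Finset.erase_insert h2)
  have R : ∀ i ∈ Sᶜ, (c i • (Pi.single (insert i S) (1:k) : Wm k m)) T
      = if i ∈ T ∧ i ∉ S ∧ T = insert i S then c i else 0 := by
    intro i hi
    have hiS : i ∉ S := Finset.mem_compl.mp hi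
    rw [Pi.smul_apply, Pi.single_apply, smul_eq_mul]
    by_cases h : T = insert i S
    · rw [if_pos h, if_pos ⟨by rw [h]; exact Finset.mem_insert_self i S, hiS, h⟩]; ring
    · rw [if_neg h, mul_zero, if_neg (fun hh => h hh.2.2)]
  rw [Finset.sum_congr rfl L, Finset.sum_apply, Finset.sum_congr rfl R]
  rw [Finset.sum_subset (Finset.subset_univ T), Finset.sum_subset (Finset.subset_univ Sᶜ)]
  · intro i _ hi
    rw [if_neg]
    rintro ⟨_, h2, _⟩
    exact hi (Finset.mem_compl.mpr h2)
  · intro i _ hi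
    rw [if_neg (fun hh => hi hh.1)]

lemma g_mul_Psi (w : Wm k m) : lform c * Psi k m w = Psi k m (Uop c w) := by
  classical
  have key : ∀ S : Finset (Fin m),
      lform c * bmk k m (∏ i ∈ S, X i) = Psi k m (Uop c (Pi.single S (1:k))) := by
    intro S
    rw [U_single, map_sum]
    have R : ∀ i ∈ Sᶜ, Psi k m (c i • (Pi.single (insert i S) (1:k) : Wm k m))
        = c i • bmk k m (∏ l ∈ insert i S, X l) := by
      intro i _
      rw [map_smul, Psi_single, one_smul]
    rw [Finset.sum_congr rfl R]
    rw [lform, ← map_mul, Finset.sum_mul]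
    have L : ∀ i : Fin m, (C (c i) * X i) * (∏ l ∈ S, X l)
        = c i • (X i * ∏ l ∈ S, X l) := by
      intro i
      rw [smul_eq_C_mul, mul_assoc]
    rw [Finset.sum_congr rfl fun i _ => L i, ← Finset.sum_add_sum_compl S, map_add, map_sum,
      map_sum]
    have hS0 : ∀ i ∈ S, bmk k m (c i • (X i * ∏ l ∈ S, X l)) = 0 := by
      intro i hi
      have hz : bmk k m ((X i : MvPolynomial (Fin m) k) * ∏ l ∈ S, X l) = 0 := by
        rw [bmk_eq_zero_iff]
        have : (X i : MvPolynomial (Fin m) k) * ∏ l ∈ S, X l = X i ^ 2 * ∏ l ∈ S.erase i, X l := by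
          rw [← Finset.mul_prod_erase S _ hi, sq, mul_assoc]
        rw [this]
        exact Ideal.mul_mem_right _ _ (Ideal.subset_span ⟨i, rfl⟩)
      rw [map_smul, hz, smul_zero]
    rw [Finset.sum_congr rfl hS0, Finset.sum_const, smul_zero, zero_add]
    refine Finset.sum_congr rfl fun i hi => ?_
    rw [map_smul, Finset.prod_insert (Finset.mem_compl.mp hi)]
  calc lform c * Psi k m w
      = lform c * Psi k m (∑ T, Pi.single T (w T)) := by rw [Finset.univ_sum_single w]
    _ = ∑ T, w T • (lform c * Psi k m (Pi.single T (1:k))) := by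
        rw [map_sum, Finset.mul_sum]
        refine Finset.sum_congr rfl fun T _ => ?_
        rw [single_eq_smul, map_smul, mul_smul_comm]
    _ = ∑ T, w T • Psi k m (Uop c (Pi.single T (1:k))) := by
        refine Finset.sum_congr rfl fun T _ => ?_
        rw [Psi_single, one_smul, key]
    _ = Psi k m (Uop c w) := by
        conv_rhs => rw [← Finset.univ_sum_single w]
        rw [map_sum, map_sum]
        refine (Finset.sum_congr rfl fun T _ => ?_).symm
        rw [single_eq_smul, map_smul, map_smul]

lemma gpow_mul_Psi (n : ℕ) (w : Wm k m) :
    lform c ^ n * Psi k m w = Psi k m ((Uop c ^ n) w) := by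
  induction n with
  | zero => simp [Module.End.one_apply]
  | succ n IH =>
    rw [pow_succ', mul_assoc, IH, g_mul_Psi, pow_shift']

lemma Hdeg_Upow (n j : ℕ) (w : Wm k m) (h : Hdeg m j w) :
    Hdeg m (j + n) ((Uop c ^ n) w) := by
  induction n with
  | zero => rw [pow_zero]; exact h
  | succ n IH =>
    rw [pow_shift']
    have := Hdeg_U (c := c) IH
    exact this

end


/-- Strong-Lefschetz-type injectivity: if `g = Σ c_j x_j ∈ A₁(M)` with all `c_j ≠ 0`, then for
`0 ≤ j ≤ m/2`, multiplication by `g^{m-2j}` maps `A_j(M)` injectively into `A_{m-j}(M)`. -/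
theorem stmt12 (k : Type*) [Field k] [CharZero k] (d m : ℕ)
    (M : Matrix (Fin d) (Fin m) k) (hrk : M.rank = d) (hcol : ∀ j, ∃ i, M i j ≠ 0)
    (c : Fin m → k) (hc : ∀ j, c j ≠ 0) (hg : lform c ∈ Aj k M 1) :
    ∀ j : ℕ, 2 * j ≤ m →
      (∀ u ∈ Aj k M j, lform c ^ (m - 2 * j) * u ∈ Aj k M (m - j)) ∧
      (∀ u ∈ Aj k M j, ∀ v ∈ Aj k M j,
        lform c ^ (m - 2 * j) * u = lform c ^ (m - 2 * j) * v → u = v) := by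
  intro j h2j
  have hgA : lform c ∈ Asub k M := by
    have := (Submodule.mem_inf.mp hg).1
    exact this
  have key : ∀ u ∈ Bgrade k m j, ∃ w : Wm k m, Hdeg m j w ∧ Psi k m w = u := by
    intro u hu
    rw [Bgrade_eq] at hu
    obtain ⟨w, hw, rfl⟩ := hu
    exact ⟨w, hw, rfl⟩
  constructor
  · intro u hu
    obtain ⟨hu1, hu2⟩ := Submodule.mem_inf.mp hu
    obtain ⟨w, hw, rfl⟩ := key _ hu2
    refine Submodule.mem_inf.mpr ⟨?_, ?_⟩
    · exact (Asub k M).mul_mem (pow_mem hgA _) hu1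
    · rw [gpow_mul_Psi, Bgrade_eq]
      have hdeg : Hdeg m (j + (m - 2*j)) ((Uop c ^ (m - 2*j)) w) := Hdeg_Upow k m c (m - 2*j) j w hw
      have hidx : j + (m - 2*j) = m - j := by omega
      rw [hidx] at hdeg
      exact ⟨_, hdeg, rfl⟩
  · intro u hu v hv he
    obtain ⟨w, hw, rfl⟩ := key _ (Submodule.mem_inf.mp hu).2
    obtain ⟨w', hw', rfl⟩ := key _ (Submodule.mem_inf.mp hv).2
    rw [gpow_mul_Psi, gpow_mul_Psi] at he
    have h1 : Psi k m ((Uop c ^ (m - 2*j)) (w - w')) = 0 := by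
      rw [map_sub, map_sub, he, sub_self]
    have h0 : (Uop c ^ (m - 2*j)) (w - w') = 0 := Psi_injective k m _ h1
    have hdeg : Hdeg m j (w - w') := (Wdeg k m j).sub_mem hw hw'
    have := Upow_inj c hc j h2j (w - w') hdeg h0
    rw [sub_eq_zero] at this
    rw [this]
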